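/- Let L ⊆ ℂ²ⁿ be a positive Lagrangian subspace. Then the real-part map Re_L : L → ℝ²ⁿ, z ↦ Re z, is a bijective real-linear map, and there exists an Ω-compatible complex structure J_L on ℝ²ⁿ such that L = ker P_{J_L}, i.e. z ∈ L if and only if Re z + J_L Im z = 0. -/

import Mathlib

open Matrix

noncomputable section

/-- The standard symplectic matrix `Ω = [[0, −I],[I, 0]]` on `ℝ²ⁿ`. -/
def Omg (n : ℕ) : Matrix (Fin n ⊕ Fin n) (Fin n ⊕ Fin n) ℝ :=
  fromBlocks 0 (-1) 1 0

/-- The complexification of `Ω`. -/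
def OmgC (n : ℕ) : Matrix (Fin n ⊕ Fin n) (Fin n ⊕ Fin n) ℂ :=
  (Omg n).map Complex.ofReal

/-- Componentwise real part of a complex vector. -/
def vecRe {m : Type*} (z : m → ℂ) : m → ℝ := fun i => (z i).re

/-- Componentwise imaginary part of a complex vector. -/
def vecIm {m : Type*} (z : m → ℂ) : m → ℝ := fun i => (z i).im

/-- The hermitian form `h(z,z) = (i/2) z·Ω z̄` measuring positivity of Lagrangian
subspaces (the bar is componentwise complex conjugation). -/
def posform {n : ℕ} (z : Fin n ⊕ Fin n → ℂ) : ℂ :=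
  (Complex.I / 2) * (z ⬝ᵥ OmgC n *ᵥ star z)

set_option linter.unusedSectionVars false

section helpers
variable {m : Type*} [Fintype m] [DecidableEq m]

lemma dot_transpose (M : Matrix m m ℝ) (x y : m → ℝ) :
    (M *ᵥ x) ⬝ᵥ y = x ⬝ᵥ (Mᵀ *ᵥ y) := by
  rw [Matrix.dotProduct_mulVec, Matrix.vecMul_transpose, dotProduct_comm]

lemma mat_eq_of_dot {M N : Matrix m m ℝ}
    (h : ∀ x y, x ⬝ᵥ M *ᵥ y = x ⬝ᵥ N *ᵥ y) : M = N := by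
  ext i j
  have := h (Pi.single i 1) (Pi.single j 1)
  simpa [Matrix.mulVec_single, single_dotProduct] using this

lemma mat_eq_of_mulVec {M N : Matrix m m ℝ}
    (h : ∀ x, M *ᵥ x = N *ᵥ x) : M = N := by
  ext i j
  simpa [Matrix.mulVec_single] using congrFun (h (Pi.single j 1)) i

lemma omg_transpose (n : ℕ) : (Omg n)ᵀ = -(Omg n) := by
  simp [Omg, Matrix.fromBlocks_transpose, Matrix.fromBlocks_neg]

lemma omg_skew (n : ℕ) (x y : Fin n ⊕ Fin n → ℝ) :
    x ⬝ᵥ Omg n *ᵥ y = -(y ⬝ᵥ Omg n *ᵥ x) := by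
  have h := dot_transpose (Omg n)ᵀ x y
  rw [transpose_transpose, omg_transpose] at h
  rw [← h, Matrix.neg_mulVec, neg_dotProduct, dotProduct_comm]

lemma omg_self (n : ℕ) (x : Fin n ⊕ Fin n → ℝ) : x ⬝ᵥ Omg n *ᵥ x = 0 := by
  have := omg_skew n x x; linarith

def oc (x : m → ℝ) : m → ℂ := fun i => x i

lemma oc_dot {n : ℕ} (x y : Fin n ⊕ Fin n → ℝ) :
    oc x ⬝ᵥ OmgC n *ᵥ oc y = ((x ⬝ᵥ Omg n *ᵥ y : ℝ) : ℂ) := by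
  have h1 : OmgC n *ᵥ oc y = oc (Omg n *ᵥ y) := by
    funext i
    exact (RingHom.map_mulVec Complex.ofRealHom (Omg n) y i).symm
  rw [h1]
  have := RingHom.map_dotProduct Complex.ofRealHom x (Omg n *ᵥ y)
  exact this.symm

lemma vec_decomp (z : m → ℂ) : z = oc (vecRe z) + Complex.I • oc (vecIm z) := by
  funext i
  simp [oc, vecRe, vecIm, Complex.ext_iff]

lemma cexpand {n : ℕ} (z w : Fin n ⊕ Fin n → ℂ) :
    z ⬝ᵥ OmgC n *ᵥ w =
      ((vecRe z ⬝ᵥ Omg n *ᵥ vecRe w - vecIm z ⬝ᵥ Omg n *ᵥ vecIm w : ℝ) : ℂ) +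
      ((vecRe z ⬝ᵥ Omg n *ᵥ vecIm w + vecIm z ⬝ᵥ Omg n *ᵥ vecRe w : ℝ) : ℂ) * Complex.I := by
  conv_lhs => rw [vec_decomp z, vec_decomp w]
  simp only [add_dotProduct, dotProduct_add, Matrix.mulVec_add,
    smul_dotProduct, dotProduct_smul, Matrix.mulVec_smul, oc_dot, smul_eq_mul,
    Complex.ofReal_sub, Complex.ofReal_add]
  ring_nf
  simp [Complex.I_sq]
  ring

lemma star_re {n : ℕ} (z : Fin n ⊕ Fin n → ℂ) : vecRe (star z) = vecRe z := by
  funext i; simp [vecRe, Pi.star_apply]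

lemma star_im {n : ℕ} (z : Fin n ⊕ Fin n → ℂ) : vecIm (star z) = -vecIm z := by
  funext i; simp [vecIm, Pi.star_apply]

lemma posform_eq {n : ℕ} (z : Fin n ⊕ Fin n → ℂ) :
    posform z = ((vecRe z ⬝ᵥ Omg n *ᵥ vecIm z : ℝ) : ℂ) := by
  rw [posform, cexpand z (star z), star_re, star_im]
  have h1 := omg_self n (vecRe z)
  have h2 := omg_self n (vecIm z)
  have h3 := omg_skew n (vecIm z) (vecRe z)
  rw [Matrix.mulVec_neg, dotProduct_neg, dotProduct_neg]
  rw [h1, h2, h3]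
  push_cast
  ring_nf
  rw [Complex.I_sq]
  ring

lemma vecRe_I_smul {n : ℕ} (z : Fin n ⊕ Fin n → ℂ) :
    vecRe (Complex.I • z) = -(vecIm z) := by
  funext i; simp [vecRe, vecIm, Complex.mul_re]

lemma vecIm_I_smul {n : ℕ} (z : Fin n ⊕ Fin n → ℂ) :
    vecIm (Complex.I • z) = vecRe z := by
  funext i; simp [vecRe, vecIm, Complex.mul_im]

end helpers

/-- Let `L ⊆ ℂ²ⁿ` be a positive Lagrangian subspace. Then the
real-part map `Re_L : L → ℝ²ⁿ`, `z ↦ Re z`, is a bijective (real-linear) map, and there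
exists an `Ω`-compatible complex structure `J_L` (`J_LᵀΩJ_L = Ω`, `J_L² = −I`, `ΩJ_L`
positive definite) such that `L = ker P_{J_L}`, i.e. `z ∈ L ↔ Re z + J_L Im z = 0`. -/
theorem statement6 (n : ℕ) (L : Submodule ℂ (Fin n ⊕ Fin n → ℂ))
    (hdim : Module.finrank ℂ L = n)
    (hLag : ∀ z ∈ L, ∀ z' ∈ L, z ⬝ᵥ OmgC n *ᵥ z' = 0)
    (hpos : ∀ z ∈ L, z ≠ 0 → (posform z).im = 0 ∧ 0 < (posform z).re) :
    Function.Bijective (fun z : L => vecRe (z : Fin n ⊕ Fin n → ℂ)) ∧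
    ∃ J : Matrix (Fin n ⊕ Fin n) (Fin n ⊕ Fin n) ℝ,
      Jᵀ * Omg n * J = Omg n ∧ J * J = -1 ∧ (Omg n * J).PosDef ∧
      ∀ z : Fin n ⊕ Fin n → ℂ, z ∈ L ↔ vecRe z + J *ᵥ vecIm z = 0 := by
  classical
  -- the real-linear real-part and imaginary-part maps on L
  let ReL : L →ₗ[ℝ] (Fin n ⊕ Fin n → ℝ) :=
    { toFun := fun z => vecRe (z : Fin n ⊕ Fin n → ℂ)
      map_add' := by intro a b; funext i; simp [vecRe]
      map_smul' := by intro r a; funext i; simp [vecRe, Complex.smul_re] }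
  let ImL : L →ₗ[ℝ] (Fin n ⊕ Fin n → ℝ) :=
    { toFun := fun z => vecIm (z : Fin n ⊕ Fin n → ℂ)
      map_add' := by intro a b; funext i; simp [vecIm]
      map_smul' := by intro r a; funext i; simp [vecIm, Complex.smul_im] }
  -- injectivity of the real part map
  have hinj : Function.Injective ReL := by
    rw [← LinearMap.ker_eq_bot, eq_bot_iff]
    intro z hz
    simp only [LinearMap.mem_ker] at hz
    have hre : vecRe (z : Fin n ⊕ Fin n → ℂ) = 0 := hz
    by_contra hne
    have hzne : (z : Fin n ⊕ Fin n → ℂ) ≠ 0 := by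
      intro h
      exact hne (by simpa [Submodule.mem_bot] using Subtype.ext h)
    obtain ⟨_, hp⟩ := hpos z z.2 hzne
    rw [posform_eq, hre] at hp
    simp at hp
  -- finrank computations
  haveI : FiniteDimensional ℝ L := Module.Finite.trans (R := ℝ) ℂ L
  have hfr : Module.finrank ℝ L = Module.finrank ℝ (Fin n ⊕ Fin n → ℝ) := by
    have h1 := Module.finrank_mul_finrank ℝ ℂ L
    rw [Complex.finrank_real_complex, hdim] at h1
    rw [← h1, Module.finrank_pi]
    simp [two_mul]
  have hsurj : Function.Surjective ReL :=
    (LinearMap.injective_iff_surjective_of_finrank_eq_finrank hfr).mp hinj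
  have hbij : Function.Bijective ReL := ⟨hinj, hsurj⟩
  refine ⟨hbij, ?_⟩
  -- the linear equivalence and the map T
  let e : L ≃ₗ[ℝ] (Fin n ⊕ Fin n → ℝ) := LinearEquiv.ofBijective ReL hbij
  let T : (Fin n ⊕ Fin n → ℝ) →ₗ[ℝ] (Fin n ⊕ Fin n → ℝ) := ImL ∘ₗ (e.symm : _ →ₗ[ℝ] L)
  have he : ∀ z : L, e z = vecRe (z : Fin n ⊕ Fin n → ℂ) := fun z => rfl
  have hT : ∀ z ∈ L, T (vecRe z) = vecIm z := by
    intro z hz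
    have h1 : e.symm (vecRe z) = (⟨z, hz⟩ : L) := by
      rw [LinearEquiv.symm_apply_eq, he]
    show ImL (e.symm (vecRe z)) = vecIm z
    rw [h1]
    rfl
  -- lifts
  have hlift : ∀ x : Fin n ⊕ Fin n → ℝ, ∃ z ∈ L, vecRe z = x ∧ vecIm z = T x := by
    intro x
    refine ⟨(e.symm x : Fin n ⊕ Fin n → ℂ), (e.symm x).2, ?_⟩
    have h1 : vecRe ((e.symm x : L) : Fin n ⊕ Fin n → ℂ) = x := by
      rw [← he]; exact e.apply_symm_apply x
    refine ⟨h1, ?_⟩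
    have h2 := hT _ (e.symm x).2
    rw [h1] at h2
    exact h2.symm
  -- T ∘ T = -id
  have hTT : ∀ x, T (T x) = -x := by
    intro x
    obtain ⟨z, hz, hre, him⟩ := hlift x
    have hIz : Complex.I • z ∈ L := L.smul_mem _ hz
    have h1 := hT _ hIz
    rw [vecRe_I_smul, vecIm_I_smul, him, hre, map_neg] at h1
    exact neg_eq_iff_eq_neg.mp h1
  -- the matrix J
  let J : Matrix (Fin n ⊕ Fin n) (Fin n ⊕ Fin n) ℝ := LinearMap.toMatrix' T
  have hJ : ∀ x, J *ᵥ x = T x := by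
    intro x
    rw [← Matrix.toLin'_apply, Matrix.toLin'_toMatrix']
  -- Lagrangian identities in real form
  have hlag2 : ∀ x y : Fin n ⊕ Fin n → ℝ,
      x ⬝ᵥ Omg n *ᵥ y - T x ⬝ᵥ Omg n *ᵥ T y = 0 ∧
      x ⬝ᵥ Omg n *ᵥ T y + T x ⬝ᵥ Omg n *ᵥ y = 0 := by
    intro x y
    obtain ⟨z, hz, hre, him⟩ := hlift x
    obtain ⟨w, hw, hre', him'⟩ := hlift y
    have h0 := hLag z hz w hw
    rw [cexpand z w, hre, him, hre', him'] at h0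
    have h0' : (((x ⬝ᵥ Omg n *ᵥ y - T x ⬝ᵥ Omg n *ᵥ T y : ℝ) : ℂ) +
        ((x ⬝ᵥ Omg n *ᵥ T y + T x ⬝ᵥ Omg n *ᵥ y : ℝ) : ℂ) * Complex.I) = 0 := h0
    rw [Complex.ext_iff] at h0'
    simp only [Complex.add_re, Complex.ofReal_re, Complex.mul_re, Complex.I_re, Complex.I_im,
      Complex.ofReal_im, Complex.add_im, Complex.mul_im, Complex.zero_re, Complex.zero_im] at h0'
    constructor <;> linarith [h0'.1, h0'.2]
  -- J^T Ω J = Ω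
  have hJOJ : Jᵀ * Omg n * J = Omg n := by
    apply mat_eq_of_dot
    intro x y
    rw [← Matrix.mulVec_mulVec, ← Matrix.mulVec_mulVec, ← dot_transpose, hJ, hJ]
    have := (hlag2 x y).1
    linarith
  -- J * J = -1
  have hJJ : J * J = -1 := by
    apply mat_eq_of_mulVec
    intro x
    rw [← Matrix.mulVec_mulVec, hJ, hJ, hTT, Matrix.neg_mulVec, Matrix.one_mulVec]
  -- Ω J is symmetric
  have hsymB : ∀ x y, y ⬝ᵥ Omg n *ᵥ T x = x ⬝ᵥ Omg n *ᵥ T y := by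
    intro x y
    have h1 := (hlag2 y x).2
    have h2 := omg_skew n (T y) x
    linarith
  have hsym : (Omg n * J)ᵀ = Omg n * J := by
    apply mat_eq_of_dot
    intro x y
    rw [← dot_transpose (Omg n * J) x y,
      dotProduct_comm ((Omg n * J) *ᵥ x) y, ← Matrix.mulVec_mulVec,
      ← Matrix.mulVec_mulVec, hJ, hJ]
    exact hsymB x y
  -- positivity
  have hposJ : ∀ x, x ≠ 0 → 0 < x ⬝ᵥ (Omg n * J) *ᵥ x := by
    intro x hx
    obtain ⟨z, hz, hre, him⟩ := hlift x
    have hzne : z ≠ 0 := by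
      intro h
      apply hx
      rw [← hre, h]
      funext i; simp [vecRe]
    obtain ⟨_, hp⟩ := hpos z hz hzne
    rw [posform_eq, hre, him] at hp
    rw [← Matrix.mulVec_mulVec, hJ]
    simpa using hp
  refine ⟨J, hJOJ, hJJ, ⟨?_, ?_⟩, ?_⟩
  · -- IsHermitian
    show (Omg n * J)ᴴ = Omg n * J
    rw [conjTranspose_eq_transpose_of_trivial]
    exact hsym
  · intro x hx
    have hx' : (x : Fin n ⊕ Fin n → ℝ) ≠ 0 := fun h => hx (Finsupp.coe_eq_zero.mp h)
    simpa [dotProduct, mulVec, Finsupp.sum_fintype, Finset.mul_sum, mul_add, mul_assoc] using hposJ x hx'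
  · -- membership characterization
    intro z
    constructor
    · intro hz
      rw [hJ, ← hT z hz, hTT]
      simp
    · intro hz
      rw [hJ] at hz
      have hx : vecRe z = -(T (vecIm z)) := eq_neg_of_add_eq_zero_left hz
      obtain ⟨w, hw, hre, him⟩ := hlift (-(T (vecIm z)))
      have h1 : vecRe w = vecRe z := by rw [hre, hx]
      have h2 : vecIm w = vecIm z := by rw [him, map_neg, hTT, neg_neg]
      have hzw : z = w := by
        funext i
        apply Complex.ext
        · exact (congrFun h1 i).symm
        · exact (congrFun h2 i).symm
      rw [hzw]; exact hw
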